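/- Let 𝔍 be the family of all bounded (possibly empty or degenerate) intervals of ℝ and let l : 𝔍 → ℝ be the interval length function. Then 𝔍 is an interval system on ℝ, and l is σ-additive: whenever I ∈ 𝔍 is the union of a countable pairwise disjoint family (I_λ)_{λ∈Λ} of members of 𝔍, the family (l(I_λ)) is summable with sum l(I). -/
import Mathlib


/-- A family `S` of subsets of `X` is an *interval system* if for all `A, B ∈ S` there exist
countable pairwise disjoint families `D₁, D₂ ⊆ S` with `⋃₀ D₁ = A \ B` and `⋃₀ D₂ = A ∩ B`. -/
def IsIntervalSystem {X : Type*} (S : Set (Set X)) : Prop :=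
  ∀ A ∈ S, ∀ B ∈ S,
    (∃ D : Set (Set X), D ⊆ S ∧ D.Countable ∧ D.PairwiseDisjoint id ∧ ⋃₀ D = A \ B) ∧
    (∃ D : Set (Set X), D ⊆ S ∧ D.Countable ∧ D.PairwiseDisjoint id ∧ ⋃₀ D = A ∩ B)

/-- A map `μ` defined on the sets of `X`, with values in a commutative topological group, is
a *measure* on the set system `S` if it is σ-additive on `S`: whenever a member `B` of `S`
is the union of a countable pairwise disjoint family `(A i)` of members of `S`, the net of
finite partial sums `∑ i ∈ Ξ, μ (A i)` (over finite `Ξ`, directed by inclusion) converges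
to `μ B`, i.e. `HasSum (fun i => μ (A i)) (μ B)`. -/
def IsAddMeasure {X W : Type*} [AddCommMonoid W] [TopologicalSpace W]
    (S : Set (Set X)) (μ : Set X → W) : Prop :=
  ∀ (ι : Type) (A : ι → Set X) (B : Set X), Countable ι → B ∈ S →
    (∀ i, A i ∈ S) → (Pairwise fun i j => Disjoint (A i) (A j)) →
    (⋃ i, A i) = B → HasSum (fun i => μ (A i)) (μ B)

/-- The family of all bounded (possibly empty or degenerate) intervals of `ℝ`:
the bounded order-connected subsets of `ℝ`. -/
def boundedIntervals : Set (Set ℝ) :=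
  {I : Set ℝ | I.OrdConnected ∧ Bornology.IsBounded I}

/-- The interval length function (`= 0` on the empty set, by the conventions
`sSup ∅ = sInf ∅ = 0` in `ℝ`). -/
noncomputable def intervalLength (I : Set ℝ) : ℝ := sSup I - sInf I

open MeasureTheory

lemma volume_eq_length {I : Set ℝ} (hI : I ∈ boundedIntervals) :
    volume I = ENNReal.ofReal (intervalLength I) := by
  obtain ⟨hoc, hb⟩ := hI
  rcases I.eq_empty_or_nonempty with rfl | hne
  · simp [intervalLength, Real.sSup_empty, Real.sInf_empty]
  · obtain ⟨hbb, hba⟩ := isBounded_iff_bddBelow_bddAbove.mp hb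
    set a := sInf I
    set b := sSup I
    have h1 : Set.Ioo a b ⊆ I := by
      intro x hx
      obtain ⟨y, hy, hyx⟩ := exists_lt_of_csInf_lt hne hx.1
      obtain ⟨z, hz, hxz⟩ := exists_lt_of_lt_csSup hne hx.2
      exact hoc.out hy hz ⟨hyx.le, hxz.le⟩
    have h2 : I ⊆ Set.Icc a b := fun x hx => ⟨csInf_le hbb hx, le_csSup hba hx⟩
    have h3 : volume (Set.Ioo a b) ≤ volume I := measure_mono h1
    have h4 : volume I ≤ volume (Set.Icc a b) := measure_mono h2
    rw [Real.volume_Ioo] at h3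
    rw [Real.volume_Icc] at h4
    exact le_antisymm h4 h3

lemma length_nonneg {I : Set ℝ} (hI : I ∈ boundedIntervals) : 0 ≤ intervalLength I := by
  rcases I.eq_empty_or_nonempty with rfl | ⟨x, hx⟩
  · simp [intervalLength, Real.sSup_empty, Real.sInf_empty]
  · obtain ⟨hbb, hba⟩ := isBounded_iff_bddBelow_bddAbove.mp hI.2
    exact sub_nonneg.mpr ((csInf_le hbb hx).trans (le_csSup hba hx))

lemma length_eq_toReal {I : Set ℝ} (hI : I ∈ boundedIntervals) :
    intervalLength I = (volume I).toReal := by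
  rw [volume_eq_length hI, ENNReal.toReal_ofReal (length_nonneg hI)]

lemma diff_piece_mem_left {A B : Set ℝ} (hA : A ∈ boundedIntervals) (hB : B ∈ boundedIntervals)
    {b₀ : ℝ} (hb₀ : b₀ ∈ B) : (A \ B) ∩ Set.Iio b₀ ∈ boundedIntervals := by
  refine ⟨⟨?_⟩, hA.2.subset ((Set.inter_subset_left).trans Set.diff_subset)⟩
  rintro x ⟨⟨hxA, hxB⟩, hx⟩ y ⟨⟨hyA, hyB⟩, hy⟩ z ⟨hxz, hzy⟩
  refine ⟨⟨hA.1.out hxA hyA ⟨hxz, hzy⟩, fun hzB => ?_⟩, lt_of_le_of_lt hzy hy⟩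
  exact hyB (hB.1.out hzB hb₀ ⟨hzy, hy.le⟩)

lemma diff_piece_mem_right {A B : Set ℝ} (hA : A ∈ boundedIntervals) (hB : B ∈ boundedIntervals)
    {b₀ : ℝ} (hb₀ : b₀ ∈ B) : (A \ B) ∩ Set.Ioi b₀ ∈ boundedIntervals := by
  refine ⟨⟨?_⟩, hA.2.subset ((Set.inter_subset_left).trans Set.diff_subset)⟩
  rintro x ⟨⟨hxA, hxB⟩, hx⟩ y ⟨⟨hyA, hyB⟩, hy⟩ z ⟨hxz, hzy⟩
  refine ⟨⟨hA.1.out hxA hyA ⟨hxz, hzy⟩, fun hzB => ?_⟩, lt_of_lt_of_le hx hxz⟩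
  exact hxB (hB.1.out hb₀ hzB ⟨hx.le, hxz⟩)

theorem part1 : IsIntervalSystem boundedIntervals := by
  intro A hA B hB
  constructor
  · rcases B.eq_empty_or_nonempty with rfl | ⟨b₀, hb₀⟩
    · exact ⟨{A}, by simpa using hA, Set.countable_singleton _,
        Set.pairwiseDisjoint_singleton _ _, by simp⟩
    · refine ⟨{(A \ B) ∩ Set.Iio b₀, (A \ B) ∩ Set.Ioi b₀}, ?_, ?_, ?_, ?_⟩
      · rintro s (rfl | rfl)
        · exact diff_piece_mem_left hA hB hb₀
        · exact diff_piece_mem_right hA hB hb₀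
      · exact (Set.countable_singleton _).insert _
      · have hdisj : Disjoint ((A \ B) ∩ Set.Iio b₀) ((A \ B) ∩ Set.Ioi b₀) :=
          ((Set.Iio_disjoint_Ici le_rfl).mono_right Set.Ioi_subset_Ici_self).mono Set.inter_subset_right Set.inter_subset_right
        rintro s (rfl | rfl) t (rfl | rfl) hst
        · exact absurd rfl hst
        · exact hdisj
        · exact hdisj.symm
        · exact absurd rfl hst
      · rw [Set.sUnion_pair]
        ext x
        simp only [Set.mem_union, Set.mem_inter_iff, Set.mem_Iio, Set.mem_Ioi]
        constructor
        · rintro (⟨h, _⟩ | ⟨h, _⟩) <;> exact h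
        · intro h
          rcases lt_trichotomy x b₀ with hlt | rfl | hgt
          · exact Or.inl ⟨h, hlt⟩
          · exact absurd hb₀ h.2
          · exact Or.inr ⟨h, hgt⟩
  · refine ⟨{A ∩ B}, ?_, Set.countable_singleton _, Set.pairwiseDisjoint_singleton _ _, by simp⟩
    rintro s rfl
    exact ⟨hA.1.inter hB.1, hA.2.subset Set.inter_subset_left⟩

theorem part2 : ∀ (ι : Type) (A : ι → Set ℝ) (B : Set ℝ), Countable ι → B ∈ boundedIntervals →
    (∀ i, A i ∈ boundedIntervals) → (Pairwise fun i j => Disjoint (A i) (A j)) →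
    (⋃ i, A i) = B → HasSum (fun i => intervalLength (A i)) (intervalLength B) := by
  intro ι A B hcount hB hA hdisj hUnion
  haveI := hcount
  have hmeas : ∀ i, MeasurableSet (A i) := fun i => (hA i).1.measurableSet
  have hvol : volume B = ∑' i, volume (A i) := by
    rw [← hUnion]; exact measure_iUnion hdisj hmeas
  have hfin : ∑' i, volume (A i) ≠ ⊤ := by
    rw [← hvol, volume_eq_length hB]; exact ENNReal.ofReal_ne_top
  have key := (ENNReal.summable_toReal hfin).hasSum
  rw [← ENNReal.tsum_toReal_eq (fun i => by
    rw [volume_eq_length (hA i)]; exact ENNReal.ofReal_ne_top), ← hvol] at key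
  have heq : (fun i => intervalLength (A i)) = fun i => (volume (A i)).toReal :=
    funext fun i => length_eq_toReal (hA i)
  rw [heq, length_eq_toReal hB]
  exact key

/-- The family of bounded intervals of `ℝ` is an interval system, and the
interval length function is σ-additive on it: whenever a bounded interval is the countable
pairwise disjoint union of bounded intervals, the family of their lengths is summable with
sum the length of the whole interval. -/
theorem statement3 :
    IsIntervalSystem boundedIntervals ∧ IsAddMeasure boundedIntervals intervalLength := by
  exact ⟨part1, part2⟩
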